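/- For m ≥ 2 and positive reals l_1,…,l_m with l = ∑ l_i, the sum over all partitions of {1,…,m} into two nonempty blocks I_1, I_2 with 1 ∈ I_1 of (∑_{i∈I_1} l_i)^{|I_1|−1} (∑_{i∈I_2} l_i)^{|I_2|−1} equals (m−1) l^{m−2}. -/

import Mathlib

open Finset

variable {ι : Type*} [DecidableEq ι]

lemma pow_eq_mul_pow_sub_one {a : ℝ} {k : ℕ} (hk : 1 ≤ k) : a ^ k = a * a ^ (k - 1) := by
  conv_lhs => rw [show k = (k - 1) + 1 by omega]
  rw [pow_succ']

/-- Hurwitz–Abel sum: over subsets `S` of `s`, with the `S = ∅` term read as `(y+ε)^n`. -/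
noncomputable def hAux (z : ι → ℝ) (s : Finset ι) (x y : ℝ) : ℝ :=
  ∑ S ∈ s.powerset,
    if S = ∅ then (y + ∑ i ∈ s, z i) ^ s.card
    else x * (x + ∑ i ∈ S, z i) ^ (S.card - 1) * (y + ∑ i ∈ s \ S, z i) ^ (s.card - S.card)

lemma swap_lemma (s : Finset ι) (F : ι → Finset ι → ℝ) :
    ∑ j ∈ s, ∑ S ∈ (s.erase j).powerset, F j S
      = ∑ S ∈ s.powerset, ∑ j ∈ s \ S, F j S := by
  refine Finset.sum_comm' ?_
  intro j S
  simp only [mem_powerset, mem_sdiff, subset_erase]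
  tauto

lemma erase_sdiff_comm' {s S : Finset ι} {j : ι} :
    (s \ S).erase j = (s.erase j) \ S := by
  ext x
  simp only [mem_erase, mem_sdiff]
  tauto

lemma sum_sdiff_split (z : ι → ℝ) {s S : Finset ι} {j : ι} (hj : j ∈ s)
    (hS : S ⊆ s.erase j) : ∑ i ∈ s \ S, z i = z j + ∑ i ∈ (s.erase j) \ S, z i := by
  have hjm : j ∈ s \ S := by
    rw [mem_sdiff]
    exact ⟨hj, fun h => (mem_erase.1 (hS h)).1 rfl⟩
  rw [← Finset.add_sum_erase _ z hjm, erase_sdiff_comm']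

/-- the inner sum over subsets of `s.erase j`, written with sums over `s`-complements,
equals `hAux` on `s.erase j`. -/
lemma inner_eq (z : ι → ℝ) (s : Finset ι) (x c : ℝ) {j : ι} (hj : j ∈ s) :
    ∑ S ∈ (s.erase j).powerset,
      (if S = ∅ then (c + ∑ i ∈ s, z i) ^ (s.card - 1)
        else x * (x + ∑ i ∈ S, z i) ^ (S.card - 1)
          * (c + ∑ i ∈ s \ S, z i) ^ (s.card - S.card - 1))
      = hAux z (s.erase j) x (c + z j) := by
  unfold hAux
  refine Finset.sum_congr rfl fun S hS => ?_
  rw [mem_powerset] at hS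
  rw [card_erase_of_mem hj]
  by_cases h : S = ∅
  · rw [if_pos h, if_pos h, ← Finset.add_sum_erase _ z hj]
    ring_nf
  · rw [if_neg h, if_neg h, sum_sdiff_split z hj hS, Nat.sub_right_comm]
    ring_nf

lemma hurwitz (z : ι → ℝ) (s : Finset ι) : ∀ x y : ℝ,
    hAux z s x y = (x + y + ∑ i ∈ s, z i) ^ s.card := by
  induction s using Finset.strongInduction with
  | _ s IH =>
  intro x y
  rcases s.eq_empty_or_nonempty with rfl | hs
  · simp [hAux]
  have hn : 1 ≤ s.card := Finset.card_pos.2 hs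
  have IHerase : ∀ j ∈ s, ∀ c : ℝ,
      hAux z (s.erase j) x c = (x + c + ∑ i ∈ s.erase j, z i) ^ (s.card - 1) := by
    intro j hj c
    rw [IH _ (Finset.erase_ssubset hj), Finset.card_erase_of_mem hj]
  -- value at `y = 0`
  have hb : hAux z s x 0 = (x + ∑ i ∈ s, z i) ^ s.card := by
    unfold hAux
    rw [← Finset.sum_erase_add _ _ (Finset.mem_powerset_self s)]
    have hsne : ¬ (s = ∅) := hs.ne_empty
    rw [if_neg hsne, Finset.sdiff_self, Finset.sum_empty, Nat.sub_self, add_zero, pow_zero,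
      mul_one]
    have step1 : ∑ S ∈ s.powerset.erase s,
        (if S = ∅ then (0 + ∑ i ∈ s, z i) ^ s.card
          else x * (x + ∑ i ∈ S, z i) ^ (S.card - 1)
            * (0 + ∑ i ∈ s \ S, z i) ^ (s.card - S.card))
        = ∑ S ∈ s.powerset, ∑ j ∈ s \ S,
            z j * (if S = ∅ then (0 + ∑ i ∈ s, z i) ^ (s.card - 1)
              else x * (x + ∑ i ∈ S, z i) ^ (S.card - 1)
                * (0 + ∑ i ∈ s \ S, z i) ^ (s.card - S.card - 1)) := by
      rw [← Finset.sum_erase_add s.powerset _ (Finset.mem_powerset_self s),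
        Finset.sdiff_self, Finset.sum_empty, add_zero]
      refine Finset.sum_congr rfl fun S hS => ?_
      rw [Finset.mem_erase, Finset.mem_powerset] at hS
      obtain ⟨hSne, hSsub⟩ := hS
      have hlt : S.card < s.card := Finset.card_lt_card (hSsub.ssubset_of_ne hSne)
      rw [← Finset.sum_mul]
      by_cases h : S = ∅
      · rw [if_pos h, if_pos h]
        subst h
        rw [Finset.sdiff_empty, zero_add, pow_eq_mul_pow_sub_one hn]
      · rw [if_neg h, if_neg h, zero_add,
          pow_eq_mul_pow_sub_one (k := s.card - S.card) (by omega)]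
        ring
    rw [step1, ← swap_lemma]
    have step2 : ∀ j ∈ s, ∑ S ∈ (s.erase j).powerset,
        z j * (if S = ∅ then (0 + ∑ i ∈ s, z i) ^ (s.card - 1)
          else x * (x + ∑ i ∈ S, z i) ^ (S.card - 1)
            * (0 + ∑ i ∈ s \ S, z i) ^ (s.card - S.card - 1))
        = z j * (x + ∑ i ∈ s, z i) ^ (s.card - 1) := by
      intro j hj
      rw [← Finset.mul_sum, inner_eq z s x 0 hj, IHerase j hj]
      rw [show x + (0 + z j) + ∑ i ∈ s.erase j, z i
            = x + (z j + ∑ i ∈ s.erase j, z i) by ring,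
        Finset.add_sum_erase _ z hj]
    rw [Finset.sum_congr rfl step2, ← Finset.sum_mul, pow_eq_mul_pow_sub_one hn]
    ring
  -- derivative in `y`
  have ha : ∀ t : ℝ, HasDerivAt (fun y => hAux z s x y)
      ((s.card : ℝ) * (x + t + ∑ i ∈ s, z i) ^ (s.card - 1)) t := by
    intro t
    have key : ∑ S ∈ s.powerset,
        (if S = ∅ then (s.card : ℝ) * (t + ∑ i ∈ s, z i) ^ (s.card - 1)
          else x * (x + ∑ i ∈ S, z i) ^ (S.card - 1) * (((s.card - S.card : ℕ) : ℝ)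
            * (t + ∑ i ∈ s \ S, z i) ^ (s.card - S.card - 1)))
        = (s.card : ℝ) * (x + t + ∑ i ∈ s, z i) ^ (s.card - 1) := by
      have step1 : ∀ S ∈ s.powerset,
          (if S = ∅ then (s.card : ℝ) * (t + ∑ i ∈ s, z i) ^ (s.card - 1)
            else x * (x + ∑ i ∈ S, z i) ^ (S.card - 1) * (((s.card - S.card : ℕ) : ℝ)
              * (t + ∑ i ∈ s \ S, z i) ^ (s.card - S.card - 1)))
          = ∑ j ∈ s \ S, (if S = ∅ then (t + ∑ i ∈ s, z i) ^ (s.card - 1)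
              else x * (x + ∑ i ∈ S, z i) ^ (S.card - 1)
                * (t + ∑ i ∈ s \ S, z i) ^ (s.card - S.card - 1)) := by
        intro S hS
        rw [mem_powerset] at hS
        rw [Finset.sum_const, Finset.card_sdiff_of_subset hS, nsmul_eq_mul]
        by_cases h : S = ∅
        · rw [if_pos h, if_pos h]
          subst h
          rw [Finset.card_empty, Nat.sub_zero]
        · rw [if_neg h, if_neg h]
          ring
      rw [Finset.sum_congr rfl step1, ← swap_lemma]
      have step2 : ∀ j ∈ s,
          (∑ S ∈ (s.erase j).powerset,
            (if S = ∅ then (t + ∑ i ∈ s, z i) ^ (s.card - 1)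
              else x * (x + ∑ i ∈ S, z i) ^ (S.card - 1)
                * (t + ∑ i ∈ s \ S, z i) ^ (s.card - S.card - 1)))
          = (x + t + ∑ i ∈ s, z i) ^ (s.card - 1) := by
        intro j hj
        rw [inner_eq z s x t hj, IHerase j hj,
          show x + (t + z j) + ∑ i ∈ s.erase j, z i
            = x + t + (z j + ∑ i ∈ s.erase j, z i) by ring,
          Finset.add_sum_erase _ z hj]
      rw [Finset.sum_congr rfl step2, Finset.sum_const, nsmul_eq_mul]
    have hd : HasDerivAt (fun y => ∑ S ∈ s.powerset,
        (if S = ∅ then (y + ∑ i ∈ s, z i) ^ s.card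
          else x * (x + ∑ i ∈ S, z i) ^ (S.card - 1)
            * (y + ∑ i ∈ s \ S, z i) ^ (s.card - S.card)))
        (∑ S ∈ s.powerset,
          (if S = ∅ then (s.card : ℝ) * (t + ∑ i ∈ s, z i) ^ (s.card - 1)
            else x * (x + ∑ i ∈ S, z i) ^ (S.card - 1) * (((s.card - S.card : ℕ) : ℝ)
              * (t + ∑ i ∈ s \ S, z i) ^ (s.card - S.card - 1)))) t := by
      refine HasDerivAt.fun_sum fun S hS => ?_
      by_cases h : S = ∅
      · simp only [if_pos h]
        have := ((hasDerivAt_id t).add_const (∑ i ∈ s, z i)).fun_pow s.card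
        simpa using this
      · simp only [if_neg h]
        have := (((hasDerivAt_id t).add_const (∑ i ∈ s \ S, z i)).fun_pow
          (s.card - S.card)).const_mul (x * (x + ∑ i ∈ S, z i) ^ (S.card - 1))
        simpa [mul_assoc] using this
    rw [key] at hd
    unfold hAux
    exact hd
  -- conclude by constancy of the difference
  have hconst : hAux z s x y - (x + y + ∑ i ∈ s, z i) ^ s.card
      = hAux z s x 0 - (x + 0 + ∑ i ∈ s, z i) ^ s.card := by
    have hder : ∀ u : ℝ, HasDerivAt
        (fun y => hAux z s x y - (x + y + ∑ i ∈ s, z i) ^ s.card) 0 u := by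
      intro u
      have h2 : HasDerivAt (fun y : ℝ => (x + y + ∑ i ∈ s, z i) ^ s.card)
          ((s.card : ℝ) * (x + u + ∑ i ∈ s, z i) ^ (s.card - 1)) u := by
        have := (((hasDerivAt_id u).const_add x).add_const (∑ i ∈ s, z i)).fun_pow s.card
        simpa using this
      simpa using (ha u).fun_sub h2
    exact is_const_of_deriv_eq_zero (fun u => (hder u).differentiableAt)
      (fun u => (hder u).deriv) y 0
  rw [hb, add_zero] at hconst
  linarith

lemma erase_sdiff_erase {s B : Finset ι} {j : ι} (hjB : j ∈ B) :
    (s.erase j) \ (B.erase j) = s \ B := by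
  ext a
  simp only [mem_sdiff, mem_erase]
  constructor
  · rintro ⟨⟨haj, has⟩, h⟩
    exact ⟨has, fun haB => h ⟨haj, haB⟩⟩
  · rintro ⟨has, haB⟩
    exact ⟨⟨fun h => haB (h ▸ hjB), has⟩, fun h => haB h.2⟩

lemma keyG (z : ι → ℝ) (s : Finset ι) (x : ℝ) :
    ∑ T ∈ s.powerset.filter (fun T => T ≠ s),
      (x + ∑ i ∈ T, z i) ^ T.card * (∑ i ∈ s \ T, z i) ^ ((s \ T).card - 1)
    = (s.card : ℝ) * (x + ∑ i ∈ s, z i) ^ (s.card - 1) := by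
  have hRHS : (s.card : ℝ) * (x + ∑ i ∈ s, z i) ^ (s.card - 1)
      = ∑ j ∈ s, hAux z (s.erase j) (z j) x := by
    have h0 : ∀ j ∈ s, hAux z (s.erase j) (z j) x = (x + ∑ i ∈ s, z i) ^ (s.card - 1) := by
      intro j hj
      rw [hurwitz, card_erase_of_mem hj,
        show z j + x + ∑ i ∈ s.erase j, z i = x + (z j + ∑ i ∈ s.erase j, z i) by ring,
        Finset.add_sum_erase _ z hj]
    rw [Finset.sum_congr rfl h0, Finset.sum_const, nsmul_eq_mul]
  rw [hRHS]
  have h2 : ∀ j ∈ s, hAux z (s.erase j) (z j) x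
      = ∑ B ∈ s.powerset.filter (fun B => j ∈ B),
          (if B.erase j = ∅ then (x + ∑ i ∈ s.erase j, z i) ^ (s.erase j).card
            else z j * (z j + ∑ i ∈ B.erase j, z i) ^ ((B.erase j).card - 1)
              * (x + ∑ i ∈ (s.erase j) \ (B.erase j), z i)
                ^ ((s.erase j).card - (B.erase j).card)) := by
    intro j hj
    unfold hAux
    refine Finset.sum_bij' (fun S _ => insert j S) (fun B _ => B.erase j) ?_ ?_ ?_ ?_ ?_
    · intro S hS
      rw [mem_powerset] at hS
      rw [mem_filter, mem_powerset]
      exact ⟨insert_subset hj ((hS.trans (erase_subset j s))), mem_insert_self j S⟩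
    · intro B hB
      rw [mem_filter, mem_powerset] at hB
      rw [mem_powerset]
      exact erase_subset_erase j hB.1
    · intro S hS
      rw [mem_powerset] at hS
      exact erase_insert (fun hjS => (mem_erase.1 (hS hjS)).1 rfl)
    · intro B hB
      rw [mem_filter] at hB
      exact insert_erase hB.2
    · intro S hS
      rw [mem_powerset] at hS
      rw [erase_insert (fun hjS => (mem_erase.1 (hS hjS)).1 rfl)]
  rw [Finset.sum_congr rfl h2]
  rw [Finset.sum_comm' (t' := s.powerset) (s' := fun B => B)
    (by
      intro j B
      simp only [mem_filter, mem_powerset]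
      constructor
      · rintro ⟨hj, hB, hjB⟩; exact ⟨hjB, hB⟩
      · rintro ⟨hjB, hB⟩; exact ⟨hB hjB, hB, hjB⟩)]
  -- now a sum over B ⊆ s of an inner sum over j ∈ B
  conv_rhs => rw [← Finset.sum_filter_of_ne (p := fun B => B ≠ ∅)
    (by
      intro B hB hne
      rintro rfl
      exact hne Finset.sum_empty)]
  refine Finset.sum_bij' (fun T _ => s \ T) (fun B _ => s \ B) ?_ ?_ ?_ ?_ ?_
  · intro T hT
    rw [mem_filter, mem_powerset] at hT
    rw [mem_filter, mem_powerset]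
    refine ⟨sdiff_subset, ?_⟩
    intro h
    have := congrArg (fun u => s \ u) h
    simp only [Finset.sdiff_sdiff_eq_self hT.1, Finset.sdiff_empty] at this
    exact hT.2 this
  · intro B hB
    rw [mem_filter, mem_powerset] at hB
    rw [mem_filter, mem_powerset]
    refine ⟨sdiff_subset, ?_⟩
    intro h
    obtain ⟨j, hj⟩ := Finset.nonempty_iff_ne_empty.2 hB.2
    have hjs : j ∈ s := hB.1 hj
    have hmem : j ∈ s \ B := by
      show j ∈ s \ B
      rw [show s \ B = s from h]
      exact hjs
    exact (mem_sdiff.1 hmem).2 hj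
  · intro T hT
    rw [mem_filter, mem_powerset] at hT
    exact Finset.sdiff_sdiff_eq_self hT.1
  · intro B hB
    rw [mem_filter, mem_powerset] at hB
    exact Finset.sdiff_sdiff_eq_self hB.1
  · intro T hT
    rw [mem_filter, mem_powerset] at hT
    obtain ⟨hTs, hTne⟩ := hT
    have hBsub : s \ T ⊆ s := sdiff_subset
    have hBs : s \ (s \ T) = T := Finset.sdiff_sdiff_eq_self hTs
    have hBne : s \ T ≠ ∅ := by
      intro h
      exact hTne (Finset.Subset.antisymm hTs (Finset.sdiff_eq_empty_iff_subset.1 h))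
    have hTlt : T.card < s.card := card_lt_card (hTs.ssubset_of_ne hTne)
    by_cases h1 : (s \ T).card = 1
    · obtain ⟨j0, hj0⟩ := Finset.card_eq_one.1 h1
      have hTj : s.erase j0 = T := by rw [Finset.erase_eq, ← hj0, hBs]
      rw [hj0]
      simp only [Finset.sum_singleton, Finset.erase_singleton, eq_self_iff_true, if_true,
        Finset.card_singleton, hTj]
      simp
    · have h2le : 2 ≤ (s \ T).card := by
        have : (s \ T).Nonempty := Finset.nonempty_iff_ne_empty.2 hBne
        have := Finset.card_pos.2 this
        omega
      have step : ∀ j ∈ s \ T,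
          (if (s \ T).erase j = ∅ then (x + ∑ i ∈ s.erase j, z i) ^ (s.erase j).card
            else z j * (z j + ∑ i ∈ (s \ T).erase j, z i) ^ (((s \ T).erase j).card - 1)
              * (x + ∑ i ∈ (s.erase j) \ ((s \ T).erase j), z i)
                ^ ((s.erase j).card - ((s \ T).erase j).card))
          = z j * ((∑ i ∈ s \ T, z i) ^ ((s \ T).card - 1 - 1)
              * (x + ∑ i ∈ T, z i) ^ T.card) := by
        intro j hj
        have hjs : j ∈ s := (mem_sdiff.1 hj).1
        have herne : (s \ T).erase j ≠ ∅ := by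
          intro h
          have := Finset.card_erase_of_mem hj
          rw [h] at this
          simp at this
          omega
        rw [if_neg herne, Finset.add_sum_erase _ z hj, erase_sdiff_erase hj, hBs,
          Finset.card_erase_of_mem hj, Finset.card_erase_of_mem hjs,
          show s.card - 1 - ((s \ T).card - 1) = T.card by
            have := Finset.card_sdiff_of_subset hTs
            omega]
        ring
      rw [Finset.sum_congr rfl step, ← Finset.sum_mul,
        pow_eq_mul_pow_sub_one (k := (s \ T).card - 1) (by omega)]
      ring

theorem stmt_5 (m : ℕ) (hm : 2 ≤ m) (l : Fin m → ℝ) (hl : ∀ i, 0 < l i) :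
    ∑ I ∈ Finset.univ.filter
        (fun I : Finset (Fin m) => (⟨0, by omega⟩ : Fin m) ∈ I ∧ I ≠ Finset.univ),
      (∑ i ∈ I, l i) ^ (I.card - 1) * (∑ i ∈ Iᶜ, l i) ^ (Iᶜ.card - 1)
      = ((m : ℝ) - 1) * (∑ i, l i) ^ (m - 2) := by
  set e0 : Fin m := ⟨0, by omega⟩ with he0
  set s : Finset (Fin m) := Finset.univ.erase e0 with hs
  have key := keyG l s (l e0)
  have hscard : s.card = m - 1 := by
    rw [hs, Finset.card_erase_of_mem (Finset.mem_univ _), Finset.card_univ, Fintype.card_fin]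
  have hsum : l e0 + ∑ i ∈ s, l i = ∑ i, l i := Finset.add_sum_erase _ l (Finset.mem_univ e0)
  rw [hscard, hsum] at key
  have hcast : ((m - 1 : ℕ) : ℝ) = (m : ℝ) - 1 := by
    have h1 : (1:ℕ) ≤ m := by omega
    rw [Nat.cast_sub h1, Nat.cast_one]
  rw [hcast, show m - 1 - 1 = m - 2 by omega] at key
  rw [← key]
  have hinsert_erase_univ : insert e0 s = Finset.univ := by
    rw [hs]
    exact Finset.insert_erase (Finset.mem_univ e0)
  refine Finset.sum_bij' (fun I _ => I.erase e0) (fun T _ => insert e0 T) ?_ ?_ ?_ ?_ ?_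
  · intro I hI
    rw [Finset.mem_filter] at hI
    obtain ⟨-, hI0, hIne⟩ := hI
    rw [Finset.mem_filter, Finset.mem_powerset]
    refine ⟨Finset.erase_subset_erase e0 (Finset.subset_univ I), ?_⟩
    intro h
    have h' : I.erase e0 = s := h
    apply hIne
    rw [← Finset.insert_erase hI0, h', hinsert_erase_univ]
  · intro T hT
    rw [Finset.mem_filter, Finset.mem_powerset] at hT
    obtain ⟨hTs, hTne⟩ := hT
    rw [Finset.mem_filter]
    refine ⟨Finset.mem_univ _, Finset.mem_insert_self _ _, ?_⟩
    intro h
    have h' : insert e0 T = Finset.univ := h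
    apply hTne
    have he0T : e0 ∉ T := fun hc => (Finset.mem_erase.1 (hTs hc)).1 rfl
    rw [← Finset.erase_insert he0T, h', hs]
  · intro I hI
    rw [Finset.mem_filter] at hI
    exact Finset.insert_erase hI.2.1
  · intro T hT
    rw [Finset.mem_filter, Finset.mem_powerset] at hT
    exact Finset.erase_insert (fun hc => (Finset.mem_erase.1 (hT.1 hc)).1 rfl)
  · intro I hI
    rw [Finset.mem_filter] at hI
    obtain ⟨-, hI0, hIne⟩ := hI
    have hcompl : Iᶜ = s \ (I.erase e0) := by
      rw [Finset.compl_eq_univ_sdiff, hs, erase_sdiff_erase hI0]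
    rw [hcompl, ← Finset.add_sum_erase _ l hI0, Finset.card_erase_of_mem hI0]
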